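/- Let f: R^n -> R^k be twice continuously differentiable, k > 1, and suppose D_x F-tilde(x, alpha) is invertible for every Pareto critical point x and every alpha in A(x). Then the closure of P_int in R^n equals P, i.e. every Pareto critical point is a limit of Pareto critical points admitting a strictly positive KKT multiplier. -/

import Mathlib

noncomputable def grad (n : ℕ) (g : (Fin n → ℝ) → ℝ) (x : Fin n → ℝ) : Fin n → ℝ :=
  fun j => fderiv ℝ g x (Pi.single j 1)

noncomputable def Ftilde (n K : ℕ) (f : Fin (K + 1) → (Fin n → ℝ) → ℝ)
    (p : (Fin n → ℝ) × (Fin K → ℝ)) : Fin n → ℝ :=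
  (∑ i : Fin K, p.2 i •
      (grad n (f i.castSucc) p.1 - grad n (f (Fin.last K)) p.1))
    + grad n (f (Fin.last K)) p.1

def openSimplex (K : ℕ) : Set (Fin K → ℝ) := {α | (∀ i, 0 < α i) ∧ ∑ i, α i < 1}

def closedSimplex (K : ℕ) : Set (Fin K → ℝ) := {α | (∀ i, 0 ≤ α i) ∧ ∑ i, α i ≤ 1}

noncomputable def DxFtilde (n K : ℕ) (f : Fin (K + 1) → (Fin n → ℝ) → ℝ)
    (p : (Fin n → ℝ) × (Fin K → ℝ)) : (Fin n → ℝ) →L[ℝ] (Fin n → ℝ) :=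
  fderiv ℝ (fun x => Ftilde n K f (x, p.2)) p.1

/-- The set of (reduced) KKT multipliers of `x`. -/
def KKTset (n K : ℕ) (f : Fin (K + 1) → (Fin n → ℝ) → ℝ) (x : Fin n → ℝ) :
    Set (Fin K → ℝ) :=
  {α | α ∈ closedSimplex K ∧ Ftilde n K f (x, α) = 0}

/-- The Pareto critical set. -/
def ParetoCritical (n K : ℕ) (f : Fin (K + 1) → (Fin n → ℝ) → ℝ) : Set (Fin n → ℝ) :=
  {x | ∃ α, α ∈ KKTset n K f x}

/-- The Pareto critical points with a strictly positive KKT multiplier. -/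
def ParetoCriticalInt (n K : ℕ) (f : Fin (K + 1) → (Fin n → ℝ) → ℝ) : Set (Fin n → ℝ) :=
  {x | ∃ α ∈ openSimplex K, Ftilde n K f (x, α) = 0}


theorem isCompact_closedSimplex' (K : ℕ) : IsCompact (closedSimplex K) := by
  have hsub : closedSimplex K ⊆ Set.pi Set.univ fun _ : Fin K => Set.Icc (0:ℝ) 1 := by
    intro α hα i _
    refine ⟨hα.1 i, ?_⟩
    calc α i ≤ ∑ j, α j := Finset.single_le_sum (fun j _ => hα.1 j) (Finset.mem_univ i)
      _ ≤ 1 := hα.2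
  have hclosed : IsClosed (closedSimplex K) := by
    have h1 : IsClosed {α : Fin K → ℝ | ∀ i, 0 ≤ α i} := by
      have : {α : Fin K → ℝ | ∀ i, 0 ≤ α i} = ⋂ i, {α | 0 ≤ α i} := by
        ext; simp
      rw [this]
      exact isClosed_iInter fun i => isClosed_le continuous_const (continuous_apply i)
    have h2 : IsClosed {α : Fin K → ℝ | ∑ i, α i ≤ 1} :=
      isClosed_le (by continuity) continuous_const
    exact h1.inter h2
  exact ((isCompact_univ_pi fun _ => isCompact_Icc).of_isClosed_subset hclosed hsub)

theorem closedSimplex_subset_closure_open (K : ℕ) (hK : 0 < K) :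
    closedSimplex K ⊆ closure (openSimplex K) := by
  intro α hα
  set c : Fin K → ℝ := fun _ => 1 / (2 * K) with hc
  have hcsum : ∑ _i : Fin K, (1 / (2 * (K:ℝ))) = 1 / 2 := by
    rw [Finset.sum_const, Finset.card_univ, Fintype.card_fin, nsmul_eq_mul]
    field_simp
  have hKpos : (0:ℝ) < K := by exact_mod_cast hK
  have hcpos : 0 < 1 / (2 * (K:ℝ)) := by positivity
  have hmem : ∀ m : ℕ, (1 - (1:ℝ)/(m+2)) • α + ((1:ℝ)/(m+2)) • c ∈ openSimplex K := by
    intro m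
    have hu0 : 0 < (1:ℝ)/(m+2) := by positivity
    have hu1 : (1:ℝ)/(m+2) ≤ 1 := by
      rw [div_le_one (by positivity)]; linarith [Nat.cast_nonneg (α := ℝ) m]
    constructor
    · intro i
      have := hα.1 i
      have : 0 ≤ (1 - (1:ℝ)/(m+2)) * α i := mul_nonneg (by linarith) this
      simp only [Pi.add_apply, Pi.smul_apply, smul_eq_mul]
      have : 0 < ((1:ℝ)/(m+2)) * c i := mul_pos hu0 hcpos
      nlinarith [mul_nonneg (sub_nonneg.mpr hu1) (hα.1 i)]
    · simp only [Pi.add_apply, Pi.smul_apply, smul_eq_mul]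
      rw [Finset.sum_add_distrib, ← Finset.mul_sum, ← Finset.mul_sum]
      have : ∑ i, c i = 1/2 := by rw [hc]; exact hcsum
      rw [this]
      nlinarith [hα.2, mul_le_mul_of_nonneg_left hα.2 (sub_nonneg.mpr hu1)]
  have hu : Filter.Tendsto (fun m : ℕ => (1:ℝ)/(m+2)) Filter.atTop (nhds 0) := by
    simp only [one_div]
    exact tendsto_inv_atTop_zero.comp (Filter.tendsto_atTop_add_const_right Filter.atTop 2
      tendsto_natCast_atTop_atTop)
  have htend : Filter.Tendsto (fun m : ℕ => (1 - (1:ℝ)/(m+2)) • α + ((1:ℝ)/(m+2)) • c)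
      Filter.atTop (nhds α) := by
    have := ((((tendsto_const_nhds : Filter.Tendsto (fun _ : ℕ => (1:ℝ)) Filter.atTop (nhds 1)).sub hu)).smul_const α).add (hu.smul_const c)
    simpa using this
  exact mem_closure_of_tendsto htend (Filter.Eventually.of_forall hmem)

theorem grad_contDiff (n : ℕ) (g : (Fin n → ℝ) → ℝ) (hg : ContDiff ℝ 2 g) :
    ContDiff ℝ 1 (grad n g) := by
  apply contDiff_pi.mpr
  intro j
  exact (hg.fderiv_right (le_refl _)).clm_apply contDiff_const

theorem Ftilde_contDiff (n K : ℕ) (f : Fin (K + 1) → (Fin n → ℝ) → ℝ)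
    (hf : ∀ i, ContDiff ℝ 2 (f i)) : ContDiff ℝ 1 (Ftilde n K f) := by
  have hlast : ContDiff ℝ 1 fun p : (Fin n → ℝ) × (Fin K → ℝ) =>
      grad n (f (Fin.last K)) p.1 := (grad_contDiff n _ (hf _)).comp contDiff_fst
  apply ContDiff.add _ hlast
  apply ContDiff.sum
  intro i _
  exact ((contDiff_pi.mp contDiff_snd i)).smul
    (((grad_contDiff n _ (hf _)).comp contDiff_fst).sub hlast)


/-- if `D_x F̃(x,α)` is invertible for all `x ∈ P` and `α ∈ A(x)`, then the
closure of `P_int` equals `P`. -/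
theorem closure_Pint_eq_P (n K : ℕ) (hK : 0 < K)
    (f : Fin (K + 1) → (Fin n → ℝ) → ℝ) (hf : ∀ i, ContDiff ℝ 2 (f i))
    (hinv : ∀ x ∈ ParetoCritical n K f, ∀ α ∈ KKTset n K f x,
      IsUnit (DxFtilde n K f (x, α))) :
    closure (ParetoCriticalInt n K f) = ParetoCritical n K f := by
  have isCompact_closedSimplex : IsCompact (closedSimplex K) := isCompact_closedSimplex' K
  have closedSimplex_sub : closedSimplex K ⊆ closure (openSimplex K) :=
    closedSimplex_subset_closure_open K hK
  have hFc : ContDiff ℝ 1 (Ftilde n K f) := Ftilde_contDiff n K f hf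
  apply Set.Subset.antisymm
  · -- closure P_int ⊆ P
    intro x hx
    obtain ⟨xs, hxs, hlim⟩ := mem_closure_iff_seq_limit.mp hx
    choose αs hαopen hαzero using hxs
    have hαsub : ∀ m, αs m ∈ closedSimplex K := fun m =>
      ⟨fun i => ((hαopen m).1 i).le, (hαopen m).2.le⟩
    obtain ⟨β, hβ, φ, hφ, hβlim⟩ := isCompact_closedSimplex.isSeqCompact hαsub
    refine ⟨β, hβ, ?_⟩
    have h1 : Filter.Tendsto (fun m => Ftilde n K f (xs (φ m), αs (φ m))) Filter.atTop
        (nhds (Ftilde n K f (x, β))) :=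
      (hFc.continuous.tendsto _).comp
        (((hlim.comp hφ.tendsto_atTop)).prodMk_nhds hβlim)
    have h2 : (fun m => Ftilde n K f (xs (φ m), αs (φ m))) = fun _ => 0 :=
      funext fun m => hαzero _
    rw [h2] at h1
    exact tendsto_nhds_unique h1 tendsto_const_nhds
  · -- P ⊆ closure P_int
    intro x hxP
    obtain ⟨α, hαC, hα0⟩ := hxP
    set D' : ((Fin n → ℝ) × (Fin K → ℝ)) →L[ℝ] (Fin n → ℝ) :=
      fderiv ℝ (Ftilde n K f) (x, α) with hD'
    set A0 : (Fin n → ℝ) →L[ℝ] (Fin n → ℝ) :=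
      D'.comp (ContinuousLinearMap.inl ℝ (Fin n → ℝ) (Fin K → ℝ)) with hA0
    have hpart : HasFDerivAt (fun y => Ftilde n K f (y, α)) A0 x := by
      rw [hA0, hD']
      exact HasFDerivAt.comp x ((hFc.differentiable one_ne_zero) (x, α)).hasFDerivAt
        (hasFDerivAt_prodMk_left (𝕜 := ℝ) x α)
    have hDx : DxFtilde n K f (x, α) = A0 := hpart.fderiv
    have hunit : IsUnit A0 := by
      rw [← hDx]
      exact hinv x ⟨α, hαC, hα0⟩ α ⟨hαC, hα0⟩
    obtain ⟨u, hu⟩ := hunit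
    set N : (Fin n → ℝ) →L[ℝ] (Fin n → ℝ) := ↑u⁻¹ with hNdef
    have hN1 : ∀ v, N (A0 v) = v := by
      intro v
      rw [← hu]
      change ((↑u⁻¹ * ↑u : (Fin n → ℝ) →L[ℝ] (Fin n → ℝ))) v = v
      rw [u.inv_mul]
      rfl
    have hN2 : ∀ v, A0 (N v) = v := by
      intro v
      rw [← hu]
      change ((↑u * ↑u⁻¹ : (Fin n → ℝ) →L[ℝ] (Fin n → ℝ))) v = v
      rw [u.mul_inv]
      rfl
    set G : (Fin n → ℝ) × (Fin K → ℝ) → (Fin n → ℝ) × (Fin K → ℝ) :=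
      fun p => (Ftilde n K f p, p.2) with hGdef
    set Dmap := D'.prod (ContinuousLinearMap.snd ℝ (Fin n → ℝ) (Fin K → ℝ)) with hDmap
    have hstrictF : HasStrictFDerivAt (Ftilde n K f) D' (x, α) := by
      rw [hD']
      exact hFc.contDiffAt.hasStrictFDerivAt one_ne_zero
    have hstrictD : HasStrictFDerivAt G Dmap (x, α) :=
      hstrictF.prodMk hasStrictFDerivAt_snd
    set B : (Fin K → ℝ) →L[ℝ] (Fin n → ℝ) :=
      D'.comp (ContinuousLinearMap.inr ℝ (Fin n → ℝ) (Fin K → ℝ)) with hB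
    set T : ((Fin n → ℝ) × (Fin K → ℝ)) →L[ℝ] ((Fin n → ℝ) × (Fin K → ℝ)) :=
      (N.comp ((ContinuousLinearMap.fst ℝ (Fin n → ℝ) (Fin K → ℝ))
        - B.comp (ContinuousLinearMap.snd ℝ (Fin n → ℝ) (Fin K → ℝ)))).prod
        (ContinuousLinearMap.snd ℝ (Fin n → ℝ) (Fin K → ℝ)) with hT
    have hsplit : ∀ (w : Fin n → ℝ) (v : Fin K → ℝ), D' (w, v) = A0 w + B v := by
      intro w v
      rw [hA0, hB]
      simp only [ContinuousLinearMap.comp_apply, ContinuousLinearMap.inl_apply,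
        ContinuousLinearMap.inr_apply]
      rw [← map_add]
      norm_num
    have hleft : Function.LeftInverse T Dmap := by
      intro p
      obtain ⟨w, v⟩ := p
      simp only [hT, hDmap, ContinuousLinearMap.prod_apply, ContinuousLinearMap.coe_comp',
        Function.comp_apply, ContinuousLinearMap.coe_sub', Pi.sub_apply,
        ContinuousLinearMap.coe_fst', ContinuousLinearMap.coe_snd']
      rw [hsplit w v]
      simp [hN1]
    have hright : Function.RightInverse T Dmap := by
      intro p
      obtain ⟨w, v⟩ := p
      simp only [hT, hDmap, ContinuousLinearMap.prod_apply, ContinuousLinearMap.coe_comp',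
        Function.comp_apply, ContinuousLinearMap.coe_sub', Pi.sub_apply,
        ContinuousLinearMap.coe_fst', ContinuousLinearMap.coe_snd']
      rw [hsplit (N (w - B v)) v]
      simp [hN2]
    set Deq := ContinuousLinearEquiv.equivOfInverse Dmap T hleft hright with hDeq
    have hcoe : (Deq : ((Fin n → ℝ) × (Fin K → ℝ)) →L[ℝ] ((Fin n → ℝ) × (Fin K → ℝ)))
        = Dmap := by
      apply ContinuousLinearMap.ext
      intro p
      rw [hDeq]
      rfl
    have hstrictD' : HasStrictFDerivAt G
        (Deq : ((Fin n → ℝ) × (Fin K → ℝ)) →L[ℝ] ((Fin n → ℝ) × (Fin K → ℝ))) (x, α) := by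
      rw [hcoe]; exact hstrictD
    set g := hstrictD'.localInverse G Deq (x, α) with hg
    have hgc : ContinuousAt g (G (x, α)) := hstrictD'.localInverse_continuousAt
    have hgfix : g (G (x, α)) = (x, α) := hstrictD'.localInverse_apply_image
    have hev : ∀ᶠ y in nhds (G (x, α)), G (g y) = y :=
      hstrictD'.eventually_right_inverse
    have hGx : G (x, α) = ((0 : Fin n → ℝ), α) := by
      rw [hGdef]
      simp only
      rw [hα0]
    rw [hGx] at hgc hgfix hev
    rw [mem_closure_iff_nhds]
    intro U hU
    have hV1 : {y : (Fin n → ℝ) × (Fin K → ℝ) | (g y).1 ∈ U}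
        ∈ nhds ((0 : Fin n → ℝ), α) := by
      apply ContinuousAt.preimage_mem_nhds (continuous_fst.continuousAt.comp hgc)
      show U ∈ nhds (g ((0 : Fin n → ℝ), α)).1
      rw [hgfix]
      exact hU
    have hV : {y : (Fin n → ℝ) × (Fin K → ℝ) | (g y).1 ∈ U ∧ G (g y) = y}
        ∈ nhds ((0 : Fin n → ℝ), α) := by
      filter_upwards [hV1, hev] with y hy1 hy2
      exact ⟨hy1, hy2⟩
    obtain ⟨W1, hW1, W2, hW2, hWsub⟩ := mem_nhds_prod_iff.mp hV
    obtain ⟨β, hβW, hβopen⟩ := mem_closure_iff_nhds.mp (closedSimplex_sub hαC) W2 hW2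
    set q : (Fin n → ℝ) × (Fin K → ℝ) := ((0 : Fin n → ℝ), β) with hqdef
    have hqmem : q ∈ {y : (Fin n → ℝ) × (Fin K → ℝ) | (g y).1 ∈ U ∧ G (g y) = y} :=
      hWsub ⟨mem_of_mem_nhds hW1, hβW⟩
    obtain ⟨hq1, hq2⟩ := hqmem
    have h2 : (g q).2 = β := by
      have := congrArg Prod.snd hq2
      simpa [hGdef, hqdef] using this
    have h1 : Ftilde n K f (g q) = 0 := by
      have := congrArg Prod.fst hq2
      simpa [hGdef, hqdef] using this
    refine ⟨(g q).1, hq1, β, hβopen, ?_⟩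
    have h3 : ((g q).1, β) = g q := by
      rw [← h2]
    rw [h3]
    exact h1
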